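/- Fix t1 with t1 ≤ s_min. Then the function f(t2) = MI(t1,t2,a) has exactly one point D where the left derivative strictly exceeds the right derivative, namely D = e_max (assuming p > 0 and using one-sided derivatives, which exist everywhere since f is piecewise linear). -/

import Mathlib

/-- Minimum intersection of an activity (sMin, sMax, p) with interval [t1,t2]. -/
noncomputable def MI (sMin sMax p t1 t2 : ℝ) : ℝ :=
  max 0 (min (min p (t2 - t1)) (min (sMin + p - t1) (t2 - sMax)))

/-- Left derivative. -/
noncomputable def leftD (f : ℝ → ℝ) (x : ℝ) : ℝ := derivWithin f (Set.Iio x) x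

/-- Right derivative. -/
noncomputable def rightD (f : ℝ → ℝ) (x : ℝ) : ℝ := derivWithin f (Set.Ioi x) x

open Set Filter

private lemma mi_simp (sMin sMax p t1 t2 : ℝ) (hs : sMin ≤ sMax) (ht1 : t1 ≤ sMin) :
    MI sMin sMax p t1 t2 = max 0 (min p (t2 - sMax)) := by
  unfold MI
  congr 1
  have h2 : t2 - sMax ≤ t2 - t1 := by linarith
  have h3 : p ≤ sMin + p - t1 := by linarith
  apply le_antisymm
  · exact le_min (min_le_of_left_le (min_le_left _ _)) (min_le_of_right_le (min_le_right _ _))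
  · exact le_min (le_min (min_le_left _ _) ((min_le_right _ _).trans h2))
      (le_min ((min_le_left _ _).trans h3) (min_le_right _ _))

private lemma dw_sub_Iio (c x : ℝ) : derivWithin (fun t => t - c) (Set.Iio x) x = 1 :=
  ((hasDerivWithinAt_id x _).sub_const c).derivWithin (uniqueDiffWithinAt_Iio x)

private lemma dw_sub_Ioi (c x : ℝ) : derivWithin (fun t => t - c) (Set.Ioi x) x = 1 :=
  ((hasDerivWithinAt_id x _).sub_const c).derivWithin (uniqueDiffWithinAt_Ioi x)

theorem mi_unique_inflection_case1 (sMin sMax p t1 : ℝ)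
    (hs : sMin ≤ sMax) (hp : 0 < p) (ht1 : t1 ≤ sMin) :
    ∀ x : ℝ,
      leftD (fun t2 => MI sMin sMax p t1 t2) x >
        rightD (fun t2 => MI sMin sMax p t1 t2) x ↔ x = sMax + p := by
  intro x
  set g : ℝ → ℝ := fun t => max 0 (min p (t - sMax)) with hg
  have hfg : (fun t2 => MI sMin sMax p t1 t2) = g := by
    funext t; exact mi_simp sMin sMax p t1 t hs ht1
  rw [leftD, rightD, hfg]
  have gval_le (t : ℝ) (h : t ≤ sMax) : g t = 0 :=
    max_eq_left (le_trans (min_le_right _ _) (by linarith))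
  have gval_mid (t : ℝ) (h1 : sMax ≤ t) (h2 : t ≤ sMax + p) : g t = t - sMax := by
    rw [hg]; simp only
    rw [min_eq_right (by linarith), max_eq_right (by linarith)]
  have gval_ge (t : ℝ) (h : sMax + p ≤ t) : g t = p := by
    rw [hg]; simp only
    rw [min_eq_left (by linarith), max_eq_right (by linarith)]
  rcases lt_trichotomy x (sMax + p) with hx | hx | hx
  · -- x < sMax + p : no inflection
    constructor
    · intro hcontra
      exfalso
      rcases lt_trichotomy x sMax with hx2 | hx2 | hx2
      · -- g = 0 near x
        have hev : g =ᶠ[nhds x] (fun _ => (0:ℝ)) := by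
          filter_upwards [Iio_mem_nhds hx2] with t ht
          exact gval_le t (le_of_lt ht)
        have hl : derivWithin g (Iio x) x = 0 := by
          rw [(hev.filter_mono nhdsWithin_le_nhds).derivWithin_eq (gval_le x hx2.le)]
          exact congrFun (derivWithin_const _ 0) x
        have hr : derivWithin g (Ioi x) x = 0 := by
          rw [(hev.filter_mono nhdsWithin_le_nhds).derivWithin_eq (gval_le x hx2.le)]
          exact congrFun (derivWithin_const _ 0) x
        rw [hl, hr] at hcontra; exact lt_irrefl _ hcontra
      · -- x = sMax : left 0, right 1
        subst hx2
        have hl : derivWithin g (Iio x) x = 0 := by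
          have hev : g =ᶠ[nhdsWithin x (Iio x)] (fun _ => (0:ℝ)) := by
            filter_upwards [self_mem_nhdsWithin] with t ht
            exact gval_le t (le_of_lt ht)
          rw [hev.derivWithin_eq (gval_le x le_rfl)]
          exact congrFun (derivWithin_const _ 0) x
        have hr : derivWithin g (Ioi x) x = 1 := by
          have hev : g =ᶠ[nhdsWithin x (Ioi x)] (fun t => t - x) := by
            filter_upwards [self_mem_nhdsWithin,
              nhdsWithin_le_nhds (Iio_mem_nhds hx)] with t ht1' ht2'
            exact gval_mid t (le_of_lt ht1') (le_of_lt ht2')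
          rw [hev.derivWithin_eq (by rw [gval_le x le_rfl]; ring)]
          exact dw_sub_Ioi x x
        rw [hl, hr] at hcontra; linarith
      · -- sMax < x < sMax + p : both 1
        have hev : g =ᶠ[nhds x] (fun t => t - sMax) := by
          filter_upwards [Ioo_mem_nhds hx2 hx] with t ht
          exact gval_mid t ht.1.le ht.2.le
        have hgx : g x = x - sMax := gval_mid x hx2.le hx.le
        have hl : derivWithin g (Iio x) x = 1 := by
          rw [(hev.filter_mono nhdsWithin_le_nhds).derivWithin_eq hgx]
          exact dw_sub_Iio sMax x
        have hr : derivWithin g (Ioi x) x = 1 := by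
          rw [(hev.filter_mono nhdsWithin_le_nhds).derivWithin_eq hgx]
          exact dw_sub_Ioi sMax x
        rw [hl, hr] at hcontra; exact lt_irrefl _ hcontra
    · intro h; exact absurd h (ne_of_lt hx)
  · -- x = sMax + p : inflection
    subst hx
    constructor
    · intro _; rfl
    · intro _
      have hgx : g (sMax + p) = p := gval_ge _ le_rfl
      have hl : derivWithin g (Iio (sMax + p)) (sMax + p) = 1 := by
        have hev : g =ᶠ[nhdsWithin (sMax + p) (Iio (sMax + p))] (fun t => t - sMax) := by
          filter_upwards [self_mem_nhdsWithin,
            nhdsWithin_le_nhds (Ioi_mem_nhds (by linarith : sMax < sMax + p))] with t ht1' ht2'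
          exact gval_mid t (le_of_lt ht2') (le_of_lt ht1')
        rw [hev.derivWithin_eq (by rw [hgx]; ring)]
        exact dw_sub_Iio sMax (sMax + p)
      have hr : derivWithin g (Ioi (sMax + p)) (sMax + p) = 0 := by
        have hev : g =ᶠ[nhdsWithin (sMax + p) (Ioi (sMax + p))] (fun _ => p) := by
          filter_upwards [self_mem_nhdsWithin] with t ht
          exact gval_ge t (le_of_lt ht)
        rw [hev.derivWithin_eq hgx]
        exact congrFun (derivWithin_const _ p) _
      rw [hl, hr]; linarith
  · -- x > sMax + p : g = p near x
    constructor
    · intro hcontra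
      exfalso
      have hev : g =ᶠ[nhds x] (fun _ => p) := by
        filter_upwards [Ioi_mem_nhds hx] with t ht
        exact gval_ge t (le_of_lt ht)
      have hgx : g x = p := gval_ge x hx.le
      have hl : derivWithin g (Iio x) x = 0 := by
        rw [(hev.filter_mono nhdsWithin_le_nhds).derivWithin_eq hgx]
        exact congrFun (derivWithin_const _ p) x
      have hr : derivWithin g (Ioi x) x = 0 := by
        rw [(hev.filter_mono nhdsWithin_le_nhds).derivWithin_eq hgx]
        exact congrFun (derivWithin_const _ p) x
      rw [hl, hr] at hcontra; exact lt_irrefl _ hcontra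
    · intro h; exact absurd h (ne_of_gt hx)
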